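/- Adjoint of the cgf-bifunction is the logpdf-bifunction (nondegenerate case): let A : Matrix (Fin n) (Fin m) ℝ, μ : Fin n → ℝ, and Σ : Matrix (Fin n) (Fin n) ℝ symmetric positive definite. Then for all x* : Fin m → ℝ and y* : Fin n → ℝ, setting z = y* − A.mulVec x* − μ, the value −(1/2)⟪z, Σ⁻¹.mulVec z⟫ is the least element (IsLeast) of the set {r : ℝ | ∃ y : Fin n → ℝ, r = (1/2)⟪y, Σ.mulVec y⟫ + ⟪μ, y⟫ + ⟪x*, Aᵀ.mulVec y⟫ − ⟪y*, y⟫}. -/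

import Mathlib

open Matrix

/-- Adjoint of the cgf-bifunction is the logpdf-bifunction (nondegenerate
case): the infimum defining the adjoint of the cgf-bifunction of a Gaussian
morphism `(A,μ,Σ)` with `Σ` positive definite is attained at the value
`−(1/2)⟪z, Σ⁻¹ z⟫` where `z = y* − A x* − μ`. -/
theorem cgf_adjoint_logpdf (m n : ℕ)
    (A : Matrix (Fin n) (Fin m) ℝ) (μ : Fin n → ℝ)
    (S : Matrix (Fin n) (Fin n) ℝ) (hS : S.PosDef)
    (xs : Fin m → ℝ) (ys : Fin n → ℝ) :
    IsLeast {r : ℝ | ∃ y : Fin n → ℝ,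
        r = 1 / 2 * (y ⬝ᵥ S.mulVec y) + μ ⬝ᵥ y + xs ⬝ᵥ Aᵀ.mulVec y - ys ⬝ᵥ y}
      (-(1 / 2 *
        ((ys - A.mulVec xs - μ) ⬝ᵥ S⁻¹.mulVec (ys - A.mulVec xs - μ)))) := by
  set c := ys - A.mulVec xs - μ with hc
  have hdet : IsUnit S.det := hS.det_pos.ne'.isUnit
  have hinv : S * S⁻¹ = 1 := mul_nonsing_inv S hdet
  set u := S⁻¹.mulVec c with hu
  have hSu : S.mulVec u = c := by
    rw [hu, mulVec_mulVec, hinv, one_mulVec]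
  -- general rewriting of f(y)
  have key : ∀ y : Fin n → ℝ,
      1 / 2 * (y ⬝ᵥ S.mulVec y) + μ ⬝ᵥ y + xs ⬝ᵥ Aᵀ.mulVec y - ys ⬝ᵥ y
      = 1 / 2 * ((y - u) ⬝ᵥ S.mulVec (y - u)) - 1 / 2 * (c ⬝ᵥ u) := by
    intro y
    have h1 : xs ⬝ᵥ Aᵀ.mulVec y = A.mulVec xs ⬝ᵥ y := by
      rw [dotProduct_mulVec, vecMul_transpose]
    have hsym : Sᵀ = S := by simpa using hS.1.eq
    have h2 : u ⬝ᵥ S.mulVec y = c ⬝ᵥ y := by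
      rw [dotProduct_mulVec, ← mulVec_transpose, hsym, hSu]
    have h3 : y ⬝ᵥ S.mulVec u = y ⬝ᵥ c := by rw [hSu]
    have h4 : u ⬝ᵥ S.mulVec u = c ⬝ᵥ u := by
      rw [dotProduct_mulVec, ← mulVec_transpose, hsym, hSu]
    have h5 : c ⬝ᵥ y = ys ⬝ᵥ y - A.mulVec xs ⬝ᵥ y - μ ⬝ᵥ y := by
      simp [hc, sub_dotProduct]
    have h6 : y ⬝ᵥ c = c ⬝ᵥ y := dotProduct_comm _ _
    simp only [mulVec_sub, dotProduct_sub, sub_dotProduct, h1, h2, h3, h4, h5, h6]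
    ring
  constructor
  · exact ⟨u, by rw [key u]; simp [mulVec_sub, hSu]⟩
  · rintro r ⟨y, rfl⟩
    rw [key y]
    have := hS.posSemidef.dotProduct_mulVec_nonneg (y - u)
    simp at this ⊢
    linarith
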